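/- Let V₁ : [t₀,∞) → ℝ be differentiable and nonnegative with V₁'(t) = g(t) − μ·S(t) where g(t) ≤ B + α·I(t), 0 ≤ I(t) ≤ B/μ for all t, and I(t) < ε for all t > K₁. Then limsup_{t→∞} (1/t)∫_{t₀}^t S(ξ)dξ ≤ B/μ + (α/μ)·ε. -/

import Mathlib

open Set Filter MeasureTheory intervalIntegral

lemma prim_hasDerivAt {t₀ : ℝ} {f : ℝ → ℝ} (hf : ContinuousOn f (Set.Ici t₀))
    {x : ℝ} (hx : t₀ < x) :
    HasDerivAt (fun u => ∫ ξ in t₀..u, f ξ) (f x) x := by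
  have hint : IntervalIntegrable f MeasureTheory.volume t₀ x :=
    (hf.mono (by rw [Set.uIcc_of_le hx.le]; exact Icc_subset_Ici_self)).intervalIntegrable
  have hmeas : StronglyMeasurableAtFilter f (nhds x) :=
    ContinuousOn.stronglyMeasurableAtFilter isOpen_Ioi (hf.mono Set.Ioi_subset_Ici_self) x hx
  exact intervalIntegral.integral_hasDerivAt_right hint hmeas (hf.continuousAt (Ici_mem_nhds hx))

lemma prim_contOn {t₀ t : ℝ} (ht : t₀ ≤ t) {f : ℝ → ℝ} (hf : ContinuousOn f (Set.Ici t₀)) :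
    ContinuousOn (fun u => ∫ ξ in t₀..u, f ξ) (Set.Icc t₀ t) := by
  have := intervalIntegral.continuousOn_primitive_interval
    (f := f) (a := t₀) (b := t) (μ := volume) ?_
  · rwa [Set.uIcc_of_le ht] at this
  · rw [Set.uIcc_of_le ht]
    exact (hf.mono Icc_subset_Ici_self).integrableOn_compact isCompact_Icc

lemma key_ineq (B μ α t₀ t : ℝ) (ht : t₀ ≤ t)
    (S I g : ℝ → ℝ)
    (hScont : ContinuousOn S (Set.Ici t₀))
    (hIcont : ContinuousOn I (Set.Ici t₀))
    (V₁ : ℝ → ℝ) (hV₁ : Differentiable ℝ V₁) (hV₁nn : ∀ s ≥ t₀, 0 ≤ V₁ s)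
    (hV₁' : ∀ s ≥ t₀, deriv V₁ s = g s - μ * S s)
    (hg : ∀ s ≥ t₀, g s ≤ B + α * I s) :
    μ * ∫ ξ in t₀..t, S ξ ≤ V₁ t₀ + B * (t - t₀) + α * ∫ ξ in t₀..t, I ξ := by
  set φ : ℝ → ℝ := fun x => V₁ x + μ * (∫ ξ in t₀..x, S ξ) - B * (x - t₀)
      - α * (∫ ξ in t₀..x, I ξ) with hφ
  have hanti : AntitoneOn φ (Set.Icc t₀ t) := by
    apply antitoneOn_of_deriv_nonpos (convex_Icc t₀ t)
    · exact (hV₁.continuous.continuousOn.add ((prim_contOn ht hScont).const_smul μ)).sub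
        (continuous_const.mul (continuous_id.sub continuous_const)).continuousOn |>.sub
        ((prim_contOn ht hIcont).const_smul α)
    · intro x hx
      rw [interior_Icc] at hx
      have hd : HasDerivAt φ (deriv V₁ x + μ * S x - B - α * I x) x := by
        have h1 := (hV₁ x).hasDerivAt
        have h2 := (prim_hasDerivAt hScont hx.1).const_mul μ
        have h3 := (prim_hasDerivAt hIcont hx.1).const_mul α
        have h4 : HasDerivAt (fun y => B * (y - t₀)) B x := by
          simpa using ((hasDerivAt_id x).sub_const t₀).const_mul B
        exact ((h1.add h2).sub h4).sub h3
      exact hd.differentiableAt.differentiableWithinAt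
    · intro x hx
      rw [interior_Icc] at hx
      have hd : HasDerivAt φ (deriv V₁ x + μ * S x - B - α * I x) x := by
        have h1 := (hV₁ x).hasDerivAt
        have h2 := (prim_hasDerivAt hScont hx.1).const_mul μ
        have h3 := (prim_hasDerivAt hIcont hx.1).const_mul α
        have h4 : HasDerivAt (fun y => B * (y - t₀)) B x := by
          simpa using ((hasDerivAt_id x).sub_const t₀).const_mul B
        exact ((h1.add h2).sub h4).sub h3
      rw [hd.deriv, hV₁' x hx.1.le]
      have := hg x hx.1.le
      linarith
  have h0 : φ t ≤ φ t₀ :=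
    hanti (Set.mem_Icc.2 ⟨le_refl _, ht⟩) (Set.mem_Icc.2 ⟨ht, le_refl _⟩) ht
  have hVt := hV₁nn t ht
  simp only [hφ, intervalIntegral.integral_same] at h0
  linarith

lemma I_int_bound (B μ ε K₁ t₀ : ℝ) (hμ : 0 < μ) (hK₁ : t₀ ≤ K₁)
    (I : ℝ → ℝ) (hIcont : ContinuousOn I (Set.Ici t₀))
    (hIbd : ∀ t ≥ t₀, 0 ≤ I t ∧ I t ≤ B / μ)
    (hIε : ∀ t > K₁, I t < ε) :
    ∀ t ≥ K₁, (∫ ξ in t₀..t, I ξ) ≤ (B/μ) * (K₁ - t₀) + ε * (t - K₁) := by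
  have hIK₁ : I K₁ ≤ ε := by
    have hc : ContinuousWithinAt I (Set.Ioi K₁) K₁ :=
      (hIcont K₁ hK₁).mono (fun x hx => le_trans hK₁ (le_of_lt hx))
    refine le_of_tendsto hc ?_
    filter_upwards [self_mem_nhdsWithin] with x hx
    exact (hIε x hx).le
  intro t ht
  have htt₀ : t₀ ≤ t := hK₁.trans ht
  have hint1 : IntervalIntegrable I volume t₀ K₁ :=
    (hIcont.mono (by rw [Set.uIcc_of_le hK₁]; exact Icc_subset_Ici_self)).intervalIntegrable
  have hint2 : IntervalIntegrable I volume K₁ t := by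
    refine (hIcont.mono ?_).intervalIntegrable
    rw [Set.uIcc_of_le ht]
    exact fun x hx => hK₁.trans hx.1
  rw [← intervalIntegral.integral_add_adjacent_intervals hint1 hint2]
  have h1 : (∫ ξ in t₀..K₁, I ξ) ≤ (B/μ) * (K₁ - t₀) := by
    have := intervalIntegral.integral_mono_on hK₁ hint1 intervalIntegrable_const
      (fun x hx => (hIbd x hx.1).2)
    rw [intervalIntegral.integral_const] at this; simpa [smul_eq_mul, mul_comm] using this
  have h2 : (∫ ξ in K₁..t, I ξ) ≤ ε * (t - K₁) := by
    have hb : ∀ x ∈ Set.Icc K₁ t, I x ≤ (fun _ => ε) x := by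
      intro x hx
      rcases eq_or_lt_of_le hx.1 with h | h
      · rw [← h]; exact hIK₁
      · exact (hIε x h).le
    have := intervalIntegral.integral_mono_on ht hint2 intervalIntegrable_const hb
    rw [intervalIntegral.integral_const] at this; simpa [smul_eq_mul, mul_comm] using this
  linarith

theorem stmt_12 (B μ α ε K₁ t₀ : ℝ)
    (hB : 0 < B) (hμ : 0 < μ) (hα : 0 < α) (hε : 0 < ε) (hK₁ : t₀ ≤ K₁)
    (S I g : ℝ → ℝ)
    (hScont : ContinuousOn S (Set.Ici t₀)) (hSnn : ∀ t ≥ t₀, 0 ≤ S t)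
    (hIcont : ContinuousOn I (Set.Ici t₀))
    (hIbd : ∀ t ≥ t₀, 0 ≤ I t ∧ I t ≤ B / μ)
    (hIε : ∀ t > K₁, I t < ε)
    (V₁ : ℝ → ℝ) (hV₁ : Differentiable ℝ V₁) (hV₁nn : ∀ t ≥ t₀, 0 ≤ V₁ t)
    (hV₁' : ∀ t ≥ t₀, deriv V₁ t = g t - μ * S t)
    (hg : ∀ t ≥ t₀, g t ≤ B + α * I t) :
    Filter.limsup (fun t => (1 / t) * ∫ ξ in t₀..t, S ξ) Filter.atTop
      ≤ B / μ + (α / μ) * ε := by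
  set L : ℝ := B / μ + (α / μ) * ε with hL
  set C : ℝ := (V₁ t₀ - B * t₀ + α * ((B/μ) * (K₁ - t₀)) - α * ε * K₁) / μ with hC
  set f : ℝ → ℝ := fun t => (1 / t) * ∫ ξ in t₀..t, S ξ with hf
  set h : ℝ → ℝ := fun t => C / t + L with hh
  have hfh : f ≤ᶠ[atTop] h := by
    filter_upwards [eventually_ge_atTop (max K₁ 1)] with t ht
    have ht1 : (1:ℝ) ≤ t := le_trans (le_max_right _ _) ht
    have htpos : 0 < t := lt_of_lt_of_le one_pos ht1
    have htK : K₁ ≤ t := le_trans (le_max_left _ _) ht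
    have htt₀ : t₀ ≤ t := hK₁.trans htK
    have h1 := key_ineq B μ α t₀ t htt₀ S I g hScont hIcont V₁ hV₁ hV₁nn hV₁' hg
    have h2 := I_int_bound B μ ε K₁ t₀ hμ hK₁ I hIcont hIbd hIε t htK
    have h3 : μ * ∫ ξ in t₀..t, S ξ ≤ μ * (C + L * t) := by
      have hexp : μ * (C + L * t) =
          V₁ t₀ + B * (t - t₀) + α * ((B/μ) * (K₁ - t₀) + ε * (t - K₁)) := by
        rw [hC, hL]
        field_simp
        ring
      rw [hexp]
      nlinarith [hα.le]
    have h4 : (∫ ξ in t₀..t, S ξ) ≤ C + L * t := le_of_mul_le_mul_left (by linarith) hμ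
    show (1 / t) * ∫ ξ in t₀..t, S ξ ≤ C / t + L
    rw [div_add' _ _ _ (ne_of_gt htpos)]
    rw [one_div, inv_mul_le_iff₀ htpos]
    calc (∫ ξ in t₀..t, S ξ) ≤ C + L * t := h4
      _ = t * ((C + L * t) / t) := by field_simp
  have hhL : Tendsto h atTop (nhds L) := by
    have : Tendsto (fun t : ℝ => C / t) atTop (nhds 0) :=
      tendsto_const_nhds.div_atTop tendsto_id
    simpa using this.add tendsto_const_nhds
  have hcob : IsCoboundedUnder (· ≤ ·) atTop f := by
    apply Filter.isCoboundedUnder_le_of_eventually_le atTop (x := 0)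
    filter_upwards [eventually_ge_atTop (max t₀ 1)] with t ht
    have ht1 : (1:ℝ) ≤ t := le_trans (le_max_right _ _) ht
    have htt₀ : t₀ ≤ t := le_trans (le_max_left _ _) ht
    have : 0 ≤ ∫ ξ in t₀..t, S ξ :=
      intervalIntegral.integral_nonneg htt₀ (fun u hu => hSnn u hu.1)
    positivity
  calc Filter.limsup f atTop ≤ Filter.limsup h atTop :=
        Filter.limsup_le_limsup hfh hcob hhL.isBoundedUnder_le
    _ = L := hhL.limsup_eq
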